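/- If λ₂ = 0 and λ₄ > 0 and b₁ = E[g_l(Y)g_m(Y)|S=0] ≠ 0, then the function f* = −sign(b₁)·f_m minimizes Δ_λ(f) over all f ∈ 𝓛(P_{X|S=0}). -/

import Mathlib

open Filter Topology

/-- Kullback–Leibler divergence between distributions on a finite set. -/
noncomputable def KLdiv {α : Type*} [Fintype α] (P Q : α → ℝ) : ℝ :=
  ∑ a, P a * Real.log (P a / Q a)

/-- The objective `L_λ` evaluated at the perturbed distribution
`P̃_{X|S=0}(x) = P0(x)(1+εf(x))`, with `P̃_{Y|S=0} = W ∘ P̃_{X|S=0}`.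
At `ε = 0` this is `L_λ(P_{X|S=0})`. -/
noncomputable def Lobj {𝒳 : Type*} [Fintype 𝒳]
    (P0 P1 : 𝒳 → ℝ) (W : 𝒳 → Bool → ℝ) (Q0 Q1 : Bool → ℝ)
    (l1 l2 l3 l4 : ℝ) (f : 𝒳 → ℝ) (ε : ℝ) : ℝ :=
  l1 * KLdiv (fun x => P0 x * (1 + ε * f x)) P0
    + l2 * KLdiv (fun x => P0 x * (1 + ε * f x)) P1
    + l3 * KLdiv (fun y => ∑ x, P0 x * (1 + ε * f x) * W x y) Q0
    + l4 * KLdiv (fun y => ∑ x, P0 x * (1 + ε * f x) * W x y) Q1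

private lemma aux1 (a b c : ℝ) (ha : 0 < a) (hc : 0 < c) :
    HasDerivAt (fun ε : ℝ => (a + ε * b) * Real.log ((a + ε * b) / c))
      (b * Real.log (a / c) + b) 0 := by
  have hu : HasDerivAt (fun ε : ℝ => a + ε * b) b 0 := by
    simpa using ((hasDerivAt_id (0 : ℝ)).mul_const b).const_add a
  have hv : HasDerivAt (fun ε : ℝ => (a + ε * b) / c) (b / c) 0 := hu.div_const c
  have hne : (a + 0 * b) / c ≠ 0 := by
    simp only [zero_mul, add_zero]
    positivity
  have hlog := hv.log hne
  have := hu.mul hlog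
  simp only [zero_mul, add_zero] at this
  refine this.congr_deriv ?_
  field_simp

private lemma keyDeriv
    {𝒳 : Type*} [Fintype 𝒳]
    (P0 P1 : 𝒳 → ℝ)
    (hP0pos : ∀ x, 0 < P0 x)
    (W : 𝒳 → Bool → ℝ)
    (hWsum : ∀ x, W x false + W x true = 1)
    (Q0 Q1 : Bool → ℝ)
    (hQ0 : ∀ y, Q0 y = ∑ x, P0 x * W x y)
    (hQ0pos : ∀ y, 0 < Q0 y) (hQ1pos : ∀ y, 0 < Q1 y)
    (l1 l3 l4 : ℝ)
    (b1 ρm : ℝ) (hρmpos : 0 < ρm)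
    (gm : Bool → ℝ)
    (gl : Bool → ℝ)
    (hgl : ∀ y, gl y = Real.log (Q0 y / Q1 y) - ∑ y', Q0 y' * Real.log (Q0 y' / Q1 y'))
    (hglgm : ∀ y, gl y = b1 * gm y)
    (fm : 𝒳 → ℝ)
    (hfm : ∀ x, fm x = (gm false * W x false + gm true * W x true) / ρm)
    (f : 𝒳 → ℝ) (hf0 : ∑ x, P0 x * f x = 0) :
    HasDerivAt (fun ε => Lobj P0 P1 W Q0 Q1 l1 0 l3 l4 f ε)
      (l4 * (b1 * ρm * ∑ x, P0 x * f x * fm x)) 0 := by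
  obtain ⟨c, hc⟩ : ∃ c : Bool → ℝ, ∀ y, c y = ∑ x, P0 x * f x * W x y := ⟨_, fun _ => rfl⟩
  obtain ⟨K, hK⟩ : ∃ K : ℝ, K = ∑ y', Q0 y' * Real.log (Q0 y' / Q1 y') := ⟨_, rfl⟩
  have hPx : ∀ (x : 𝒳) (ε : ℝ), P0 x * (1 + ε * f x) = P0 x + ε * (P0 x * f x) :=
    fun _ _ => by ring
  have hSy : ∀ (y : Bool) (ε : ℝ),
      (∑ x, P0 x * (1 + ε * f x) * W x y) = Q0 y + ε * c y := by
    intro y ε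
    rw [hc, hQ0, Finset.mul_sum, ← Finset.sum_add_distrib]
    exact Finset.sum_congr rfl fun x _ => by ring
  have h1 : HasDerivAt (fun ε : ℝ => KLdiv (fun x => P0 x * (1 + ε * f x)) P0)
      (∑ x, (P0 x * f x * Real.log (P0 x / P0 x) + P0 x * f x)) 0 := by
    simp only [KLdiv, hPx]
    exact HasDerivAt.fun_sum fun x _ => aux1 (P0 x) (P0 x * f x) (P0 x) (hP0pos x) (hP0pos x)
  have h3 : HasDerivAt
      (fun ε : ℝ => KLdiv (fun y => ∑ x, P0 x * (1 + ε * f x) * W x y) Q0)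
      (∑ y, (c y * Real.log (Q0 y / Q0 y) + c y)) 0 := by
    simp only [KLdiv, hSy]
    exact HasDerivAt.fun_sum fun y _ => aux1 (Q0 y) (c y) (Q0 y) (hQ0pos y) (hQ0pos y)
  have h4 : HasDerivAt
      (fun ε : ℝ => KLdiv (fun y => ∑ x, P0 x * (1 + ε * f x) * W x y) Q1)
      (∑ y, (c y * Real.log (Q0 y / Q1 y) + c y)) 0 := by
    simp only [KLdiv, hSy]
    exact HasDerivAt.fun_sum fun y _ => aux1 (Q0 y) (c y) (Q1 y) (hQ0pos y) (hQ1pos y)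
  have hL : (fun ε => Lobj P0 P1 W Q0 Q1 l1 0 l3 l4 f ε)
      = fun ε : ℝ =>
        l1 * KLdiv (fun x => P0 x * (1 + ε * f x)) P0
          + (l3 * KLdiv (fun y => ∑ x, P0 x * (1 + ε * f x) * W x y) Q0
            + l4 * KLdiv (fun y => ∑ x, P0 x * (1 + ε * f x) * W x y) Q1) := by
    funext ε
    simp only [Lobj]
    ring
  rw [hL]
  have hD := (h1.const_mul l1).add ((h3.const_mul l3).add (h4.const_mul l4))
  refine hD.congr_deriv ?_
  have hD1 : (∑ x, (P0 x * f x * Real.log (P0 x / P0 x) + P0 x * f x)) = 0 := by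
    rw [Finset.sum_congr rfl fun x _ => by
      rw [div_self (hP0pos x).ne', Real.log_one, mul_zero, zero_add]]
    exact hf0
  have hcsum : c true + c false = 0 := by
    have h : c true + c false = ∑ x, P0 x * f x := by
      rw [hc, hc, ← Finset.sum_add_distrib]
      exact Finset.sum_congr rfl fun x _ => by
        rw [← mul_add, add_comm (W x true), hWsum x, mul_one]
    rw [h, hf0]
  have hD3 : (∑ y, (c y * Real.log (Q0 y / Q0 y) + c y)) = 0 := by
    have h : ∀ y, c y * Real.log (Q0 y / Q0 y) + c y = c y := fun y => by
      rw [div_self (hQ0pos y).ne', Real.log_one, mul_zero, zero_add]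
    simp only [h]
    rw [Fintype.sum_bool, hcsum]
  have hrfm : ∀ x, gm false * W x false + gm true * W x true = ρm * fm x := fun x => by
    rw [hfm x]; field_simp
  have hS : gm true * c true + gm false * c false = ρm * ∑ x, P0 x * f x * fm x := by
    rw [hc, hc, Finset.mul_sum, Finset.mul_sum, ← Finset.sum_add_distrib, Finset.mul_sum]
    exact Finset.sum_congr rfl fun x _ => by linear_combination (P0 x * f x) * hrfm x
  have hlogr : ∀ y, Real.log (Q0 y / Q1 y) = gl y + K := fun y => by
    rw [hgl y, hK]; ring
  have hD4 : (∑ y, (c y * Real.log (Q0 y / Q1 y) + c y))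
      = b1 * ρm * ∑ x, P0 x * f x * fm x := by
    rw [Fintype.sum_bool, hlogr, hlogr, hglgm true, hglgm false]
    linear_combination b1 * hS + (K + 1) * hcsum
  rw [hD1, hD3, hD4]
  ring

theorem stmt5
    {𝒳 : Type*} [Fintype 𝒳]
    (P0 P1 : 𝒳 → ℝ)
    (hP0pos : ∀ x, 0 < P0 x) (hP0sum : ∑ x, P0 x = 1)
    (hP1pos : ∀ x, 0 < P1 x) (hP1sum : ∑ x, P1 x = 1)
    (W : 𝒳 → Bool → ℝ)
    (hWnn : ∀ x y, 0 ≤ W x y) (hWsum : ∀ x, W x false + W x true = 1)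
    (Q0 Q1 : Bool → ℝ)
    (hQ0 : ∀ y, Q0 y = ∑ x, P0 x * W x y) (hQ1 : ∀ y, Q1 y = ∑ x, P1 x * W x y)
    (hQ0pos : ∀ y, 0 < Q0 y) (hQ1pos : ∀ y, 0 < Q1 y)
    (l1 l2 l3 l4 : ℝ)
    (hl1 : 0 ≤ l1) (hl2 : l2 = 0) (hl3 : 0 ≤ l3) (hl4 : 0 < l4)
    (gl : Bool → ℝ)
    (hgl : ∀ y, gl y = Real.log (Q0 y / Q1 y) - ∑ y', Q0 y' * Real.log (Q0 y' / Q1 y'))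
    (hp1 : Q0 true < 1)
    (gm : Bool → ℝ)
    (hgmf : gm false = Real.sqrt (Q0 true / (1 - Q0 true)))
    (hgmt : gm true = -Real.sqrt ((1 - Q0 true) / Q0 true))
    (ρm : ℝ)
    (hρm : ρm = Real.sqrt (∑ x, P0 x * (gm false * W x false + gm true * W x true) ^ 2))
    (hρmpos : 0 < ρm)
    (fm : 𝒳 → ℝ)
    (hfm : ∀ x, fm x = (gm false * W x false + gm true * W x true) / ρm)
    (b1 : ℝ)
    (hb1 : b1 = ∑ y, Q0 y * (gl y * gm y))
    (hb1ne : b1 ≠ 0)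
    (fstar : 𝒳 → ℝ)
    (hfstar : ∀ x, fstar x = -Real.sign b1 * fm x) :
    ((∑ x, P0 x * fstar x = 0) ∧ (∑ x, P0 x * fstar x ^ 2 = 1)) ∧
      ∀ f : 𝒳 → ℝ, (∑ x, P0 x * f x = 0) → (∑ x, P0 x * f x ^ 2 = 1) →
        ∀ Dstar D : ℝ,
          Tendsto
            (fun ε : ℝ =>
              (Lobj P0 P1 W Q0 Q1 l1 l2 l3 l4 fstar ε
                - Lobj P0 P1 W Q0 Q1 l1 l2 l3 l4 fstar 0) / ε)
            (nhdsWithin 0 (Set.Ioi 0)) (nhds Dstar) →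
          Tendsto
            (fun ε : ℝ =>
              (Lobj P0 P1 W Q0 Q1 l1 l2 l3 l4 f ε
                - Lobj P0 P1 W Q0 Q1 l1 l2 l3 l4 f 0) / ε)
            (nhdsWithin 0 (Set.Ioi 0)) (nhds D) →
          Dstar ≤ D := by
  subst hl2
  -- basic facts about Q0
  have hQsum : Q0 false + Q0 true = 1 := by
    rw [hQ0, hQ0, ← Finset.sum_add_distrib]
    rw [Finset.sum_congr rfl fun x _ => by rw [← mul_add, hWsum x, mul_one]]
    exact hP0sum
  have hqt : 0 < Q0 true := hQ0pos true
  have hqf : 0 < Q0 false := hQ0pos false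
  have hqeq : (1 : ℝ) - Q0 true = Q0 false := by linarith
  -- square-root facts about gm
  have hS2 : Q0 false * gm false ^ 2 = Q0 true := by
    rw [hgmf, hqeq, Real.sq_sqrt (by positivity)]
    field_simp
  have hT2 : Q0 true * gm true ^ 2 = Q0 false := by
    rw [hgmt, hqeq, neg_pow, Even.neg_one_pow even_two, one_mul,
      Real.sq_sqrt (by positivity)]
    field_simp
  have hST : gm false * gm true = -1 := by
    rw [hgmf, hgmt, hqeq, mul_neg, ← Real.sqrt_mul (by positivity),
      show Q0 true / Q0 false * (Q0 false / Q0 true) = 1 by field_simp,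
      Real.sqrt_one]
  have hSpos : 0 < gm false := by
    rw [hgmf, hqeq]; positivity
  -- gm has mean zero
  have hgmmean : Q0 false * gm false + Q0 true * gm true = 0 := by
    have h0 : gm false * (Q0 false * gm false + Q0 true * gm true) = 0 := by
      linear_combination hS2 + Q0 true * hST
    exact ((mul_eq_zero.mp h0).resolve_left hSpos.ne')
  -- gl has mean zero
  have hglmean : Q0 false * gl false + Q0 true * gl true = 0 := by
    rw [hgl, hgl]
    simp only [Fintype.sum_bool]
    linear_combination
      (-(Q0 true * Real.log (Q0 true / Q1 true) + Q0 false * Real.log (Q0 false / Q1 false)))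
        * hQsum
  have hb1e : b1 = Q0 true * (gl true * gm true) + Q0 false * (gl false * gm false) := by
    rw [hb1, Fintype.sum_bool]
  -- gl = b1 • gm
  have hglgm : ∀ y, gl y = b1 * gm y := by
    intro y
    cases y with
    | false =>
      have hA : Q0 false * gl false = Q0 false * (b1 * gm false) := by
        rw [hb1e]
        linear_combination (-(Q0 false * gl false)) * hS2
          + (-(Q0 true * Q0 false * gl true)) * hST
          + Q0 false * hglmean + (-(Q0 false * gl false)) * hQsum
      exact mul_left_cancel₀ hqf.ne' hA
    | true =>
      have hB : Q0 true * gl true = Q0 true * (b1 * gm true) := by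
        rw [hb1e]
        linear_combination (-(Q0 true * gl true)) * hT2
          + (-(Q0 true * Q0 false * gl false)) * hST
          + Q0 true * hglmean + (-(Q0 true * gl true)) * hQsum
      exact mul_left_cancel₀ hqt.ne' hB
  -- moments of fm
  have hfmmean : ∑ x, P0 x * fm x = 0 := by
    have h : ∑ x, P0 x * fm x = (Q0 false * gm false + Q0 true * gm true) / ρm := by
      rw [hQ0, hQ0, Finset.sum_mul, Finset.sum_mul, ← Finset.sum_add_distrib,
        Finset.sum_div]
      exact Finset.sum_congr rfl fun x _ => by rw [hfm]; ring
    rw [h, hgmmean, zero_div]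
  have hfmsec : ∑ x, P0 x * fm x ^ 2 = 1 := by
    have hρ2 : ρm ^ 2 = ∑ x, P0 x * (gm false * W x false + gm true * W x true) ^ 2 := by
      rw [hρm, Real.sq_sqrt]
      exact Finset.sum_nonneg fun x _ => mul_nonneg (hP0pos x).le (sq_nonneg _)
    have h : ∑ x, P0 x * fm x ^ 2
        = (∑ x, P0 x * (gm false * W x false + gm true * W x true) ^ 2) / ρm ^ 2 := by
      rw [Finset.sum_div]
      exact Finset.sum_congr rfl fun x _ => by rw [hfm, div_pow]; ring
    rw [h, ← hρ2, div_self (pow_ne_zero _ hρmpos.ne')]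
  -- sign facts
  have hsgn : Real.sign b1 = 1 ∨ Real.sign b1 = -1 := by
    rcases hb1ne.lt_or_gt with h | h
    · exact Or.inr (Real.sign_of_neg h)
    · exact Or.inl (Real.sign_of_pos h)
  have hsgn2 : Real.sign b1 ^ 2 = 1 := by
    rcases hsgn with h | h <;> rw [h] <;> norm_num
  have hb1sgn : b1 * Real.sign b1 = |b1| := by
    rcases hb1ne.lt_or_gt with h | h
    · rw [Real.sign_of_neg h, abs_of_neg h]; ring
    · rw [Real.sign_of_pos h, abs_of_pos h]; ring
  -- moments of fstar
  have hfstarmean : ∑ x, P0 x * fstar x = 0 := by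
    have h : ∑ x, P0 x * fstar x = -Real.sign b1 * ∑ x, P0 x * fm x := by
      rw [Finset.mul_sum]
      exact Finset.sum_congr rfl fun x _ => by rw [hfstar]; ring
    rw [h, hfmmean, mul_zero]
  have hfstarsec : ∑ x, P0 x * fstar x ^ 2 = 1 := by
    have h : ∑ x, P0 x * fstar x ^ 2 = Real.sign b1 ^ 2 * ∑ x, P0 x * fm x ^ 2 := by
      rw [Finset.mul_sum]
      exact Finset.sum_congr rfl fun x _ => by rw [hfstar]; ring
    rw [h, hfmsec, hsgn2, mul_one]
  have hfstarfm : ∑ x, P0 x * fstar x * fm x = -Real.sign b1 := by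
    have h : ∑ x, P0 x * fstar x * fm x = -Real.sign b1 * ∑ x, P0 x * fm x ^ 2 := by
      rw [Finset.mul_sum]
      exact Finset.sum_congr rfl fun x _ => by rw [hfstar]; ring
    rw [h, hfmsec, mul_one]
  refine ⟨⟨hfstarmean, hfstarsec⟩, ?_⟩
  intro f hf0 hf2 Dstar D hTstar hTf
  -- uniqueness of the one-sided limit given the derivative
  have huniq : ∀ (g : 𝒳 → ℝ) (d Dv : ℝ),
      HasDerivAt (fun ε => Lobj P0 P1 W Q0 Q1 l1 0 l3 l4 g ε) d 0 →
      Tendsto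
        (fun ε : ℝ =>
          (Lobj P0 P1 W Q0 Q1 l1 0 l3 l4 g ε - Lobj P0 P1 W Q0 Q1 l1 0 l3 l4 g 0) / ε)
        (nhdsWithin 0 (Set.Ioi 0)) (nhds Dv) → Dv = d := by
    intro g d Dv hd hlim
    have h1 : Tendsto (slope (fun ε => Lobj P0 P1 W Q0 Q1 l1 0 l3 l4 g ε) 0)
        (nhdsWithin 0 (Set.Ioi 0)) (nhds d) :=
      (hasDerivAt_iff_tendsto_slope.mp hd).mono_left
        (nhdsWithin_mono 0 fun x hx => by
          simp only [Set.mem_compl_iff, Set.mem_singleton_iff]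
          exact ne_of_gt hx)
    have h2 : Tendsto
        (fun ε : ℝ =>
          (Lobj P0 P1 W Q0 Q1 l1 0 l3 l4 g ε - Lobj P0 P1 W Q0 Q1 l1 0 l3 l4 g 0) / ε)
        (nhdsWithin 0 (Set.Ioi 0)) (nhds d) :=
      h1.congr fun ε => by rw [slope_def_field, sub_zero]
    exact tendsto_nhds_unique hlim h2
  have hkstar := keyDeriv P0 P1 hP0pos W hWsum Q0 Q1 hQ0 hQ0pos hQ1pos l1 l3 l4
    b1 ρm hρmpos gm gl hgl hglgm fm hfm fstar hfstarmean
  have hkf := keyDeriv P0 P1 hP0pos W hWsum Q0 Q1 hQ0 hQ0pos hQ1pos l1 l3 l4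
    b1 ρm hρmpos gm gl hgl hglgm fm hfm f hf0
  have hDstar : Dstar = l4 * (b1 * ρm * ∑ x, P0 x * fstar x * fm x) :=
    huniq fstar _ Dstar hkstar hTstar
  have hDf : D = l4 * (b1 * ρm * ∑ x, P0 x * f x * fm x) :=
    huniq f _ D hkf hTf
  -- Cauchy–Schwarz
  have hCS : (∑ x, P0 x * f x * fm x) ^ 2 ≤ 1 := by
    have h := Finset.sum_mul_sq_le_sq_mul_sq Finset.univ
      (fun x => Real.sqrt (P0 x) * f x) (fun x => Real.sqrt (P0 x) * fm x)
    have e1 : ∀ x : 𝒳, (Real.sqrt (P0 x) * f x) * (Real.sqrt (P0 x) * fm x)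
        = P0 x * f x * fm x := fun x => by
      have h0 : Real.sqrt (P0 x) * Real.sqrt (P0 x) = P0 x :=
        Real.mul_self_sqrt (hP0pos x).le
      linear_combination (f x * fm x) * h0
    have e2 : ∀ x : 𝒳, (Real.sqrt (P0 x) * f x) ^ 2 = P0 x * f x ^ 2 := fun x => by
      rw [mul_pow, Real.sq_sqrt (hP0pos x).le]
    have e3 : ∀ x : 𝒳, (Real.sqrt (P0 x) * fm x) ^ 2 = P0 x * fm x ^ 2 := fun x => by
      rw [mul_pow, Real.sq_sqrt (hP0pos x).le]
    rw [Finset.sum_congr rfl fun x _ => e1 x, Finset.sum_congr rfl fun x _ => e2 x,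
      Finset.sum_congr rfl fun x _ => e3 x, hf2, hfmsec, one_mul] at h
    exact h
  have hts : (∑ x, P0 x * f x * fm x) ^ 2 ≤ 1 ^ 2 := by simpa using hCS
  have habs : |∑ x, P0 x * f x * fm x| ≤ 1 :=
    abs_le.mpr (abs_le_of_sq_le_sq' hts zero_le_one)
  have hbt : -|b1| ≤ b1 * ∑ x, P0 x * f x * fm x := by
    have h1 : |b1 * ∑ x, P0 x * f x * fm x| ≤ |b1| := by
      rw [abs_mul]
      exact mul_le_of_le_one_right (abs_nonneg _) habs
    linarith [neg_abs_le (b1 * ∑ x, P0 x * f x * fm x)]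
  rw [hDstar, hDf, hfstarfm]
  calc l4 * (b1 * ρm * -Real.sign b1) = (l4 * ρm) * (-|b1|) := by rw [← hb1sgn]; ring
    _ ≤ (l4 * ρm) * (b1 * ∑ x, P0 x * f x * fm x) :=
        mul_le_mul_of_nonneg_left hbt (mul_pos hl4 hρmpos).le
    _ = l4 * (b1 * ρm * ∑ x, P0 x * f x * fm x) := by ring
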